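/- Let E : Q → Q' be a channel with Stinespring dilation V : Q → Q'⊗A and complementary channel Ẽ, and let s = {p(x), |ψ_x⟩}_{x∈X} be an ensemble of pure states on Q with average state ρ_s. Then the coherent information loss equals the entropy defect loss of the input ensemble plus the entropy defect of the induced ancillary ensemble: δ(ρ_s, E) = Δχ(s, E) + χ(Ẽ(s)). -/

import Mathlib

open Matrix
open scoped BigOperators ComplexOrder Classical

noncomputable section

namespace QID

variable {Q Q' R A X O B : Type*}

/-- The rank-one projector `|ψ⟩⟨ψ|`. -/
def pureState (ψ : Q → ℂ) : Matrix Q Q ℂ :=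
  Matrix.vecMulVec ψ (star ψ)

/-- A density matrix: positive semidefinite with unit trace. -/
def IsDensity [Fintype Q] (ρ : Matrix Q Q ℂ) : Prop :=
  ρ.PosSemidef ∧ ρ.trace = 1

/-- Square root of a positive semidefinite matrix (junk value `0` otherwise). -/
def sqrtPSD [Fintype Q] [DecidableEq Q] (M : Matrix Q Q ℂ) : Matrix Q Q ℂ :=
  if h : M.PosSemidef then
    (h.1.eigenvectorUnitary : Matrix Q Q ℂ) *
      Matrix.diagonal (((↑) : ℝ → ℂ) ∘ Real.sqrt ∘ h.1.eigenvalues) *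
      (star h.1.eigenvectorUnitary : Matrix Q Q ℂ)
  else 0

/-- The trace norm `‖M‖₁ = Tr √(MᴴM)`. -/
def traceNorm [Fintype Q] [DecidableEq Q] (M : Matrix Q Q ℂ) : ℝ :=
  (sqrtPSD (Mᴴ * M)).trace.re

/-- The fidelity `F(ρ,σ) = (Tr|√ρ√σ|)²`. -/
def fidelity [Fintype Q] [DecidableEq Q] (ρ σ : Matrix Q Q ℂ) : ℝ :=
  (traceNorm (sqrtPSD ρ * sqrtPSD σ)) ^ 2

/-- The von Neumann entropy `S(ρ) = -Tr[ρ log₂ ρ]` (base two), computed through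
the eigenvalues of `ρ`; junk value `0` if `ρ` is not Hermitian. -/
def entropy [Fintype Q] [DecidableEq Q] (ρ : Matrix Q Q ℂ) : ℝ :=
  if h : ρ.IsHermitian then (∑ i, Real.negMulLog (h.eigenvalues i)) / Real.log 2 else 0

/-- The entropy defect (Holevo quantity) `χ(s) = S(ρ_s) - ∑ₓ p(x) S(ρₓ)` of an ensemble. -/
def entropyDefect [Fintype Q] [DecidableEq Q] [Fintype X]
    (p : X → ℝ) (ρ : X → Matrix Q Q ℂ) : ℝ :=
  entropy (∑ x, (p x : ℂ) • ρ x) - ∑ x, p x * entropy (ρ x)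

/-- The action of `id_R ⊗ Φ` on a bipartite matrix. -/
def idTensor (Φ : Matrix Q Q ℂ →ₗ[ℂ] Matrix Q' Q' ℂ)
    (M : Matrix (R × Q) (R × Q) ℂ) : Matrix (R × Q') (R × Q') ℂ :=
  fun p q => Φ (Matrix.of fun a b => M (p.1, a) (q.1, b)) p.2 q.2

/-- Complete positivity: every ampliation `id_{Fin k} ⊗ Φ` preserves positive semidefiniteness. -/
def IsCompletelyPositive [Fintype Q] [Fintype Q']
    (Φ : Matrix Q Q ℂ →ₗ[ℂ] Matrix Q' Q' ℂ) : Prop :=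
  ∀ (k : ℕ) (M : Matrix (Fin k × Q) (Fin k × Q) ℂ),
    M.PosSemidef → (idTensor Φ M).PosSemidef

def IsTracePreserving [Fintype Q] [Fintype Q']
    (Φ : Matrix Q Q ℂ →ₗ[ℂ] Matrix Q' Q' ℂ) : Prop :=
  ∀ M : Matrix Q Q ℂ, (Φ M).trace = M.trace

/-- A channel: a completely positive trace-preserving linear map. -/
def IsChannel [Fintype Q] [Fintype Q']
    (Φ : Matrix Q Q ℂ →ₗ[ℂ] Matrix Q' Q' ℂ) : Prop :=
  IsCompletelyPositive Φ ∧ IsTracePreserving Φ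

/-- A quantum instrument: a family of completely positive maps summing up to a
trace-preserving map. -/
def IsInstrument [Fintype Q] [Fintype Q'] [Fintype O]
    (E : O → (Matrix Q Q ℂ →ₗ[ℂ] Matrix Q' Q' ℂ)) : Prop :=
  (∀ m, IsCompletelyPositive (E m)) ∧
    ∀ M : Matrix Q Q ℂ, (∑ m, E m M).trace = M.trace

/-- Partial trace over the first tensor factor. -/
def ptraceL [Fintype R] (M : Matrix (R × Q) (R × Q) ℂ) : Matrix Q Q ℂ :=
  fun a b => ∑ i, M (i, a) (i, b)

/-- Partial trace over the second tensor factor. -/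
def ptraceRt [Fintype Q] (M : Matrix (R × Q) (R × Q) ℂ) : Matrix R R ℂ :=
  fun i j => ∑ a, M (i, a) (j, a)

/-- `Ψ` (a vector on `R × Q`, reference first) purifies the state `ρ` on `Q`. -/
def IsPurification [Fintype R] (ρ : Matrix Q Q ℂ) (Ψ : R × Q → ℂ) : Prop :=
  ptraceL (pureState Ψ) = ρ

/-- The channelized instrument `ρ ↦ ∑ₘ Eₘ(ρ) ⊗ |m⟩⟨m|`, acting `Q → Q' ⊗ 𝒳`. -/
def instrApply [DecidableEq O] (E : O → (Matrix Q Q ℂ →ₗ[ℂ] Matrix Q' Q' ℂ))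
    (ρ : Matrix Q Q ℂ) : Matrix (Q' × O) (Q' × O) ℂ :=
  fun p q => if p.2 = q.2 then E p.2 ρ p.1 q.1 else 0

/-- The action of `id_R ⊗ M` for the channelized instrument `M` on a bipartite matrix. -/
def instrApplyRef [DecidableEq O] (E : O → (Matrix Q Q ℂ →ₗ[ℂ] Matrix Q' Q' ℂ))
    (M : Matrix (R × Q) (R × Q) ℂ) : Matrix (R × Q' × O) (R × Q' × O) ℂ :=
  fun p q => if p.2.2 = q.2.2 then
    E p.2.2 (Matrix.of fun a b => M (p.1, a) (q.1, b)) p.2.1 q.2.1 else 0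

/-- The coherent information `I_c^{R→B}(ρ^{RB}) = S(ρ^B) - S(ρ^{RB})`. -/
def cohInfo [Fintype R] [DecidableEq R] [Fintype B] [DecidableEq B]
    (M : Matrix (R × B) (R × B) ℂ) : ℝ :=
  entropy (ptraceL M) - entropy M

/-- The quantum disturbance `δ(ρ,M) = S(ρ) - I_c^{R→Q'𝒳}((id_R ⊗ M)(Ψ))` of an
instrument, w.r.t. a purification `Ψ` of `ρ`. -/
def qDisturbance [Fintype Q] [DecidableEq Q] [Fintype Q'] [DecidableEq Q']
    [Fintype R] [DecidableEq R] [Fintype O] [DecidableEq O]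
    (ρ : Matrix Q Q ℂ) (E : O → (Matrix Q Q ℂ →ₗ[ℂ] Matrix Q' Q' ℂ))
    (Ψ : R × Q → ℂ) : ℝ :=
  entropy ρ - cohInfo (instrApplyRef E (pureState Ψ))

/-- The quantum disturbance (coherent information loss)
`δ(ρ,E) = S(ρ) - I_c^{R→Q'}((id_R ⊗ E)(Ψ))` of a channel. -/
def qDisturbanceChan [Fintype Q] [DecidableEq Q] [Fintype Q'] [DecidableEq Q']
    [Fintype R] [DecidableEq R]
    (ρ : Matrix Q Q ℂ) (E : Matrix Q Q ℂ →ₗ[ℂ] Matrix Q' Q' ℂ)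
    (Ψ : R × Q → ℂ) : ℝ :=
  entropy ρ - cohInfo (idTensor E (pureState Ψ))

/-- The quantum information gain `ι(ρ,M) = S(ρ^R) - ∑ₘ p(m) S(τ^R_m)`. -/
def qInfoGain [Fintype Q] [DecidableEq Q] [Fintype Q'] [DecidableEq Q']
    [Fintype R] [DecidableEq R] [Fintype O]
    (E : O → (Matrix Q Q ℂ →ₗ[ℂ] Matrix Q' Q' ℂ)) (Ψ : R × Q → ℂ) : ℝ :=
  entropy (ptraceRt (pureState Ψ)) -
    ∑ m, ((E m (ptraceL (pureState Ψ))).trace.re) *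
      entropy ((((E m (ptraceL (pureState Ψ))).trace.re)⁻¹ : ℝ) •
        ptraceRt (idTensor (E m) (pureState Ψ)))

/-- The corrected average output fidelity of an instrument on an ensemble:
`F_av(s,M) = sup over families of correcting channels {R_m} of
∑ₓ p(x) F(∑ₘ R_m(E_m(ρₓ)), ρₓ)`. -/
def avgFid [Fintype Q] [DecidableEq Q] [Fintype Q'] [Fintype X] [Fintype O]
    (p : X → ℝ) (ρ : X → Matrix Q Q ℂ)
    (E : O → (Matrix Q Q ℂ →ₗ[ℂ] Matrix Q' Q' ℂ)) : ℝ :=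
  ⨆ Rf : {Rf : O → (Matrix Q' Q' ℂ →ₗ[ℂ] Matrix Q Q ℂ) // ∀ m, IsChannel (Rf m)},
    ∑ x, p x * fidelity (∑ m, Rf.1 m (E m (ρ x))) (ρ x)

/-- The corrected average output fidelity of a channel on an ensemble:
`F_av(s,E) = sup over correcting channels R of ∑ₓ p(x) F(R(E(ρₓ)), ρₓ)`. -/
def avgFidChan [Fintype Q] [DecidableEq Q] [Fintype Q'] [Fintype X]
    (p : X → ℝ) (ρ : X → Matrix Q Q ℂ)
    (E : Matrix Q Q ℂ →ₗ[ℂ] Matrix Q' Q' ℂ) : ℝ :=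
  ⨆ Rc : {Rc : Matrix Q' Q' ℂ →ₗ[ℂ] Matrix Q Q ℂ // IsChannel Rc},
    ∑ x, p x * fidelity (Rc.1 (E (ρ x))) (ρ x)

/-- The corrected entanglement fidelity of an instrument w.r.t. a purification `Ψ`:
`F_e(ρ,M) = sup over families of correcting channels {R_m} of
F(∑ₘ (id_R ⊗ R_m ∘ E_m)(Ψ), Ψ)`. -/
def entFid [Fintype Q] [DecidableEq Q] [Fintype Q'] [Fintype R] [DecidableEq R] [Fintype O]
    (Ψ : R × Q → ℂ) (E : O → (Matrix Q Q ℂ →ₗ[ℂ] Matrix Q' Q' ℂ)) : ℝ :=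
  ⨆ Rf : {Rf : O → (Matrix Q' Q' ℂ →ₗ[ℂ] Matrix Q Q ℂ) // ∀ m, IsChannel (Rf m)},
    fidelity (∑ m, idTensor (Rf.1 m ∘ₗ E m) (pureState Ψ)) (pureState Ψ)

/-- A POVM: positive operators summing to the identity. -/
def IsPOVM [Fintype Q] [DecidableEq Q] [Fintype O] (P : O → Matrix Q Q ℂ) : Prop :=
  (∀ m, (P m).PosSemidef) ∧ ∑ m, P m = 1

/-- The classical mutual information `I(X:O)` of the joint distribution
`p(x,m) = p(x) Tr[ρₓ P_m]` generated by measuring the ensemble with the POVM `P`. -/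
def povmMutualInfo [Fintype Q] [Fintype X] [Fintype O]
    (p : X → ℝ) (ρ : X → Matrix Q Q ℂ) (P : O → Matrix Q Q ℂ) : ℝ :=
  ∑ x, ∑ m, p x * (ρ x * P m).trace.re *
    Real.logb 2 ((ρ x * P m).trace.re / (∑ x', p x' * (ρ x' * P m).trace.re))

/-- The accessible information: supremum of the mutual information over all POVMs. -/
def accInfo [Fintype Q] [DecidableEq Q] [Fintype X]
    (p : X → ℝ) (ρ : X → Matrix Q Q ℂ) : ℝ :=
  ⨆ k : ℕ, ⨆ P : {P : Fin k → Matrix Q Q ℂ // IsPOVM P}, povmMutualInfo p ρ P.1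

/-- The minimum overlap `min_{1 ≤ i ≤ N-1} |⟨ψ_{x_i}|ψ_{x_{i+1}}⟩|` along a path
`x : Fin N → X` of signals. -/
def pathMin [Fintype Q] (ψ : X → Q → ℂ) {N : ℕ} (x : Fin N → X) : ℝ :=
  ⨅ i : Fin (N - 1),
    ‖(star (ψ (x (Fin.castLE (Nat.sub_le N 1) i))) ⬝ᵥ
      ψ (x ⟨i.1 + 1, by have := i.isLt; omega⟩))‖

/-- `η(s)`: the supremum over all complete (surjective) paths of the minimum
consecutive overlap divided by the length of the path. -/
def eta [Fintype Q] (ψ : X → Q → ℂ) : ℝ :=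
  ⨆ N : ℕ, ⨆ x : {x : Fin N → X // Function.Surjective x}, pathMin ψ x.1 / N

/-- `ζ(s) = η(s) · minₓ p(x)`; the ensemble is irreducible iff `ζ(s) > 0`. -/
def zeta [Fintype Q] [Fintype X] (p : X → ℝ) (ψ : X → Q → ℂ) : ℝ :=
  eta ψ * ⨅ x, p x

/-- `Tr_R[(φ ⊗ 1_Q)|Ψ⟩⟨Ψ|]` for an operator `φ` on the reference system. -/
def refOp [Fintype R] (φ : Matrix R R ℂ) (Ψ : R × Q → ℂ) : Matrix Q Q ℂ :=
  fun a b => ∑ i, ∑ k, φ i k * Ψ (k, a) * star (Ψ (i, b))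


section Aux

variable {m n : Type*} [Fintype m] [DecidableEq m] [Fintype n] [DecidableEq n]

lemma det_smul_one_sub_hermitian {H : Matrix m m ℂ} (hH : H.IsHermitian) (t : ℂ) :
    Matrix.det (t • (1 : Matrix m m ℂ) - H) = ∏ i, (t - (hH.eigenvalues i : ℂ)) := by
  set U : Matrix m m ℂ := (Matrix.IsHermitian.eigenvectorUnitary hH : Matrix m m ℂ) with hUdef
  have hU : U * star U = 1 :=
    Matrix.mem_unitaryGroup_iff.mp (Matrix.IsHermitian.eigenvectorUnitary hH).2
  have hdiag : Matrix.diagonal (fun i => t - (hH.eigenvalues i : ℂ)) =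
      t • (1 : Matrix m m ℂ) - Matrix.diagonal (RCLike.ofReal ∘ hH.eigenvalues) := by
    rw [Matrix.smul_one_eq_diagonal, Matrix.diagonal_sub]
    simp [Function.comp]
  have key : U * Matrix.diagonal (fun i => t - (hH.eigenvalues i : ℂ)) * star U
      = t • (1 : Matrix m m ℂ) - H := by
    rw [hdiag, Matrix.mul_sub, Matrix.sub_mul, Matrix.mul_smul, Matrix.smul_mul, Matrix.mul_one,
      hU]
    conv_rhs => rw [hH.spectral_theorem, Unitary.conjStarAlgAut_apply]
  rw [← key, Matrix.det_mul_right_comm, hU, one_mul, Matrix.det_diagonal]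


lemma entropy_eq_of_det_rel {A : Matrix m m ℂ} {B : Matrix n n ℂ}
    (hA : A.IsHermitian) (hB : B.IsHermitian)
    (h : ∀ t : ℂ, t ≠ 0 →
      Matrix.det (t • (1 : Matrix m m ℂ) - A) * t ^ (Fintype.card n)
        = Matrix.det (t • (1 : Matrix n n ℂ) - B) * t ^ (Fintype.card m)) :
    entropy A = entropy B := by
  classical
  set sA : Multiset ℂ := Finset.univ.val.map (fun i => ((hA.eigenvalues i : ℝ) : ℂ)) with hsA
  set sB : Multiset ℂ := Finset.univ.val.map (fun i => ((hB.eigenvalues i : ℝ) : ℂ)) with hsB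
  set P : Polynomial ℂ := (sA.map fun a => Polynomial.X - Polynomial.C a).prod *
    Polynomial.X ^ (Fintype.card n) with hP
  set Q : Polynomial ℂ := (sB.map fun a => Polynomial.X - Polynomial.C a).prod *
    Polynomial.X ^ (Fintype.card m) with hQ
  have evalP : ∀ t : ℂ, Polynomial.eval t P
      = (∏ i, (t - (hA.eigenvalues i : ℂ))) * t ^ (Fintype.card n) := by
    intro t
    rw [hP, Polynomial.eval_mul, Polynomial.eval_pow, Polynomial.eval_X,
      Polynomial.eval_multiset_prod, hsA, Multiset.map_map, Multiset.map_map,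
      Finset.prod_eq_multiset_prod]
    congr 1
    refine congrArg Multiset.prod (Multiset.map_congr rfl ?_)
    intro i _
    simp
  have evalQ : ∀ t : ℂ, Polynomial.eval t Q
      = (∏ i, (t - (hB.eigenvalues i : ℂ))) * t ^ (Fintype.card m) := by
    intro t
    rw [hQ, Polynomial.eval_mul, Polynomial.eval_pow, Polynomial.eval_X,
      Polynomial.eval_multiset_prod, hsB, Multiset.map_map, Multiset.map_map,
      Finset.prod_eq_multiset_prod]
    congr 1
    refine congrArg Multiset.prod (Multiset.map_congr rfl ?_)
    intro i _
    simp
  have hPQ : P = Q := by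
    apply Polynomial.eq_of_infinite_eval_eq
    apply Set.Infinite.mono (s := {t : ℂ | t ≠ 0})
    · intro t ht
      have ht' : t ≠ 0 := ht
      have := h t ht'
      simp only [Set.mem_setOf_eq, evalP, evalQ]
      rw [← det_smul_one_sub_hermitian hA, ← det_smul_one_sub_hermitian hB]
      exact this
    · have h0 : ({(0 : ℂ)}ᶜ : Set ℂ).Infinite := (Set.finite_singleton 0).infinite_compl
      convert h0 using 1
      ext; simp
  have monP : P.Monic := by
    apply Polynomial.Monic.mul
    · exact Polynomial.monic_multiset_prod_of_monic _ _
        (fun a _ => Polynomial.monic_X_sub_C a)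
    · exact (Polynomial.monic_X).pow _
  have monQ : Q.Monic := by
    apply Polynomial.Monic.mul
    · exact Polynomial.monic_multiset_prod_of_monic _ _
        (fun a _ => Polynomial.monic_X_sub_C a)
    · exact (Polynomial.monic_X).pow _
  have rootsP : P.roots = sA + Multiset.replicate (Fintype.card n) 0 := by
    rw [hP, Polynomial.roots_mul (by
        rw [← hP]; exact monP.ne_zero),
      Polynomial.roots_multiset_prod_X_sub_C, Polynomial.roots_pow, Polynomial.roots_X,
      Multiset.nsmul_singleton]
  have rootsQ : Q.roots = sB + Multiset.replicate (Fintype.card m) 0 := by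
    rw [hQ, Polynomial.roots_mul (by
        rw [← hQ]; exact monQ.ne_zero),
      Polynomial.roots_multiset_prod_X_sub_C, Polynomial.roots_pow, Polynomial.roots_X,
      Multiset.nsmul_singleton]
  have hroots : sA + Multiset.replicate (Fintype.card n) 0
      = sB + Multiset.replicate (Fintype.card m) 0 := by
    rw [← rootsP, ← rootsQ, hPQ]
  have hsum := congrArg (fun s : Multiset ℂ =>
    ((s.map (fun z : ℂ => Real.negMulLog z.re)).sum)) hroots
  simp only [Multiset.map_add, Multiset.sum_add, Multiset.map_replicate, Complex.zero_re,
    Real.negMulLog_zero, Multiset.sum_replicate, smul_zero, add_zero] at hsum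
  rw [hsA, hsB, Multiset.map_map, Multiset.map_map] at hsum
  have hA' : (Finset.univ.val.map
      ((fun z : ℂ => Real.negMulLog z.re) ∘ fun i => ((hA.eigenvalues i : ℝ) : ℂ))).sum
      = ∑ i, Real.negMulLog (hA.eigenvalues i) := by
    rw [Finset.sum_eq_multiset_sum]
    congr 1
  have hB' : (Finset.univ.val.map
      ((fun z : ℂ => Real.negMulLog z.re) ∘ fun i => ((hB.eigenvalues i : ℝ) : ℂ))).sum
      = ∑ i, Real.negMulLog (hB.eigenvalues i) := by
    rw [Finset.sum_eq_multiset_sum]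
    congr 1
  rw [hA', hB'] at hsum
  rw [entropy, entropy, dif_pos hA, dif_pos hB, hsum]


lemma det_rel_conjTranspose (M : Matrix m n ℂ) : ∀ t : ℂ, t ≠ 0 →
    Matrix.det (t • (1 : Matrix m m ℂ) - M * Mᴴ) * t ^ (Fintype.card n)
      = Matrix.det (t • (1 : Matrix n n ℂ) - Mᴴ * M) * t ^ (Fintype.card m) := by
  intro t ht
  have h1 : t • (1 : Matrix m m ℂ) - M * Mᴴ = t • (1 - (t⁻¹ • M) * Mᴴ) := by
    rw [smul_sub, Matrix.smul_mul, smul_smul, mul_inv_cancel₀ ht, one_smul]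
  have h2 : t • (1 : Matrix n n ℂ) - Mᴴ * M = t • (1 - Mᴴ * (t⁻¹ • M)) := by
    rw [smul_sub, Matrix.mul_smul, smul_smul, mul_inv_cancel₀ ht, one_smul]
  rw [h1, h2, Matrix.det_smul, Matrix.det_smul, Matrix.det_one_sub_mul_comm]
  ring

lemma entropy_mul_conjTranspose_comm (M : Matrix m n ℂ) :
    entropy (M * Mᴴ) = entropy (Mᴴ * M) :=
  entropy_eq_of_det_rel (Matrix.isHermitian_mul_conjTranspose_self M)
    (Matrix.isHermitian_conjTranspose_mul_self M) (det_rel_conjTranspose M)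

lemma entropy_ptraceRt_eq_ptraceL (φ : m × n → ℂ) :
    entropy (ptraceRt (pureState φ)) = entropy (ptraceL (pureState φ)) := by
  set M : Matrix m n ℂ := Matrix.of fun i a => φ (i, a) with hM
  have hR : ptraceRt (pureState φ) = M * Mᴴ := by
    ext i j
    simp [ptraceRt, pureState, Matrix.vecMulVec_apply, Matrix.mul_apply,
      Matrix.conjTranspose_apply, hM]
  have hL : ptraceL (pureState φ) = (Mᴴ * M)ᵀ := by
    ext a b
    simp [ptraceL, pureState, Matrix.vecMulVec_apply, Matrix.mul_apply,
      Matrix.conjTranspose_apply, Matrix.transpose_apply, hM, mul_comm]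
  rw [hR, hL]
  apply entropy_eq_of_det_rel (Matrix.isHermitian_mul_conjTranspose_self M)
    ((Matrix.isHermitian_conjTranspose_mul_self M).transpose)
  intro t ht
  have e : t • (1 : Matrix n n ℂ) - (Mᴴ * M)ᵀ = (t • (1 : Matrix n n ℂ) - Mᴴ * M)ᵀ := by
    rw [Matrix.transpose_sub, Matrix.transpose_smul, Matrix.transpose_one]
  rw [e, Matrix.det_transpose]
  exact det_rel_conjTranspose M t ht

lemma entropy_pureState_eq_zero {ψ : m → ℂ} (hψ : star ψ ⬝ᵥ ψ = 1) :
    entropy (pureState ψ) = 0 := by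
  set M : Matrix m Unit ℂ := Matrix.of fun q _ => ψ q with hM
  have h1 : pureState ψ = M * Mᴴ := by
    ext a b
    simp [pureState, Matrix.vecMulVec_apply, Matrix.mul_apply, Matrix.conjTranspose_apply, hM]
  have h2 : Mᴴ * M = 1 := by
    ext a b
    have hab : a = b := Subsingleton.elim a b
    subst hab
    have : (Mᴴ * M) a a = star ψ ⬝ᵥ ψ := by
      simp [Matrix.mul_apply, Matrix.conjTranspose_apply, dotProduct, hM]
    rw [this, hψ, Matrix.one_apply_eq]
  rw [h1, entropy_mul_conjTranspose_comm, h2]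
  have hH : (1 : Matrix Unit Unit ℂ).IsHermitian := Matrix.isHermitian_one
  have hval : hH.eigenvalues () = 1 := by
    have hd := hH.det_eq_prod_eigenvalues
    rw [Matrix.det_one] at hd
    rw [Fintype.prod_unique] at hd
    have : ((hH.eigenvalues default : ℝ) : ℂ) = ((1:ℝ) : ℂ) := hd.symm
    exact_mod_cast this
  rw [entropy, dif_pos hH]
  rw [Fintype.sum_unique, hval, Real.negMulLog_one, zero_div]

end Aux

/-- For a channel `E` with Stinespring dilation `V : Q → Q' ⊗ A`
and complementary channel `Ẽ`, and a pure-state ensemble `s`, the coherent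
information loss equals the entropy defect loss of the input ensemble plus the
entropy defect of the induced ancillary ensemble:
`δ(ρ_s, E) = Δχ(s, E) + χ(Ẽ(s))`. -/
theorem qDisturbanceChan_eq_defectLoss_add_ancilla
    {Q Q' A X R : Type*} [Fintype Q] [DecidableEq Q] [Fintype Q'] [DecidableEq Q']
    [Fintype A] [DecidableEq A] [Fintype X] [Fintype R] [DecidableEq R]
    (V : Matrix (Q' × A) Q ℂ) (hV : Vᴴ * V = 1)
    (E : Matrix Q Q ℂ →ₗ[ℂ] Matrix Q' Q' ℂ)
    (hE : ∀ M : Matrix Q Q ℂ, E M = ptraceRt (V * M * Vᴴ))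
    (p : X → ℝ) (ψ : X → Q → ℂ)
    (hp : ∀ x, 0 < p x) (hp1 : (∑ x, p x) = 1)
    (hψ : ∀ x, star (ψ x) ⬝ᵥ ψ x = 1)
    (ρs : Matrix Q Q ℂ) (hρs : ρs = ∑ x, (p x : ℂ) • pureState (ψ x))
    (Ψ : R × Q → ℂ) (hΨ : IsPurification ρs Ψ) :
    qDisturbanceChan ρs E Ψ =
      (entropyDefect p (fun x => pureState (ψ x)) -
        entropyDefect p (fun x => E (pureState (ψ x)))) +
      entropyDefect p (fun x => ptraceL (V * pureState (ψ x) * Vᴴ)) := by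
  classical
  set PSI : (R × Q') × A → ℂ := fun pa => ∑ q : Q, V (pa.1.2, pa.2) q * Ψ (pa.1.1, q) with hPSI
  have hpsL : ptraceL (pureState Ψ) = ρs := hΨ
  -- (f) conjugating a pure state by V
  have hf : ∀ x, V * pureState (ψ x) * Vᴴ = pureState (V *ᵥ ψ x) := by
    intro x
    ext u v
    simp only [Matrix.mul_apply, pureState, Matrix.vecMulVec_apply, Matrix.conjTranspose_apply,
      Matrix.mulVec, dotProduct, Pi.star_apply, star_sum, star_mul', Finset.sum_mul,
      Finset.mul_sum]
    apply Finset.sum_congr rfl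
    intro b _
    apply Finset.sum_congr rfl
    intro c _
    ring
  -- (a) idTensor as reduced state of the dilated purification
  have ha : idTensor E (pureState Ψ) = ptraceRt (pureState PSI) := by
    ext pq rs
    show E (Matrix.of fun a b => pureState Ψ (pq.1, a) (rs.1, b)) pq.2 rs.2 = _
    rw [hE]
    simp only [ptraceRt, pureState, Matrix.vecMulVec_apply, Matrix.mul_apply,
      Matrix.conjTranspose_apply, Matrix.of_apply, hPSI, Pi.star_apply, star_sum, star_mul',
      Finset.sum_mul, Finset.mul_sum]
    apply Finset.sum_congr rfl
    intro a _
    apply Finset.sum_congr rfl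
    intro b _
    apply Finset.sum_congr rfl
    intro c _
    ring
  -- entries of ρs in terms of Ψ
  have hρe : ∀ u v, ρs u v = ∑ r, Ψ (r, u) * star (Ψ (r, v)) := by
    intro u v
    rw [← hpsL]
    simp [ptraceL, pureState, Matrix.vecMulVec_apply]
  -- (c) reduced state on the ancilla
  have hc : ptraceL (pureState PSI) = ptraceL (V * ρs * Vᴴ) := by
    ext a b
    simp only [ptraceL, pureState, Matrix.vecMulVec_apply, hPSI, Pi.star_apply, star_sum,
      star_mul', Matrix.mul_apply, Matrix.conjTranspose_apply, Finset.sum_mul, Finset.mul_sum,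
      Fintype.sum_prod_type]
    rw [Finset.sum_comm]
    apply Finset.sum_congr rfl
    intro q' _
    rw [Finset.sum_comm]
    apply Finset.sum_congr rfl
    intro u _
    rw [Finset.sum_comm]
    apply Finset.sum_congr rfl
    intro v _
    rw [hρe v u, Finset.mul_sum, Finset.sum_mul]
    apply Finset.sum_congr rfl
    intro r _
    ring
  -- (b) reduced state on Q' is the channel output
  have hb : ptraceL (idTensor E (pureState Ψ)) = E ρs := by
    rw [← hpsL]
    have hdec : ptraceL (pureState Ψ)
        = ∑ r, (Matrix.of (fun u v => pureState Ψ (r, u) (r, v)) : Matrix Q Q ℂ) := by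
      ext u v
      simp [ptraceL, Matrix.sum_apply]
    rw [hdec, map_sum]
    ext a b
    simp [ptraceL, idTensor, Matrix.sum_apply]
  -- (d) channel output of average state
  have hd : (∑ x, (p x : ℂ) • E (pureState (ψ x))) = E ρs := by
    rw [hρs, map_sum]
    simp [_root_.map_smul]
  -- linear map for the complementary channel
  let G : Matrix Q Q ℂ →ₗ[ℂ] Matrix A A ℂ :=
    { toFun := fun P => ptraceL (V * P * Vᴴ)
      map_add' := by
        intro P P'
        ext a b
        simp [ptraceL, Matrix.mul_add, Matrix.add_mul, Matrix.add_apply, Finset.sum_add_distrib]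
      map_smul' := by
        intro c P
        ext a b
        simp [ptraceL, Matrix.mul_smul, Matrix.smul_mul, Matrix.smul_apply, Finset.mul_sum] }
  -- (e) complementary channel output of average state
  have he : (∑ x, (p x : ℂ) • ptraceL (V * pureState (ψ x) * Vᴴ)) = ptraceL (V * ρs * Vᴴ) := by
    show (∑ x, (p x : ℂ) • G (pureState (ψ x))) = G ρs
    rw [hρs, map_sum]
    simp [_root_.map_smul]
  -- entropy facts
  have hx0 : ∀ x, entropy (pureState (ψ x)) = 0 := fun x => entropy_pureState_eq_zero (hψ x)
  have hgx : ∀ x, entropy (E (pureState (ψ x)))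
      = entropy (ptraceL (V * pureState (ψ x) * Vᴴ)) := by
    intro x
    rw [hE]
    have := entropy_ptraceRt_eq_ptraceL (V *ᵥ ψ x)
    rw [← hf x] at this
    exact this
  have hgl : entropy (idTensor E (pureState Ψ)) = entropy (ptraceL (V * ρs * Vᴴ)) := by
    rw [ha, entropy_ptraceRt_eq_ptraceL, hc]
  have hzero : (∑ x, p x * entropy (pureState (ψ x))) = 0 := by
    simp [hx0]
  have havg : (∑ x, p x * entropy (E (pureState (ψ x))))
      = ∑ x, p x * entropy (ptraceL (V * pureState (ψ x) * Vᴴ)) :=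
    Finset.sum_congr rfl fun x _ => by rw [hgx x]
  simp only [qDisturbanceChan, cohInfo, entropyDefect]
  rw [hb, ← hd, hgl, ← he, ← hρs, hzero, havg]
  ring

end QID
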